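/- Let E be a commutative ℚ-algebra that is finite-dimensional as a ℚ-vector space, and let E_sep denote the set of elements of E that are separable over ℚ. Then the map E_sep → ∏_{𝔪 ∈ Spec(E)} E/𝔪 induced by the quotient maps E → E/𝔪, where 𝔪 ranges over all prime ideals of E, is a bijection. -/

import Mathlib

open Polynomial

lemma aux_unit_deriv {E : Type*} [CommRing E] [Algebra ℚ E] {f : ℚ[X]} (hf : f.Separable)
    (x : E) (hx : aeval x f = 0) : IsUnit (aeval x f.derivative) := by
  obtain ⟨a, b, h⟩ := hf
  refine IsUnit.of_mul_eq_one (aeval x b) ?_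
  rw [mul_comm]
  simpa [hx, map_add, map_mul, map_one] using congrArg (aeval x) h

lemma aux_nil_self_mul_sq {E : Type*} [CommRing E] {n v : E} (hn : IsNilpotent n)
    (h : n = v * n ^ 2) : n = 0 := by
  obtain ⟨m, hm⟩ := hn
  have key : ∀ k : ℕ, n = v ^ k * n ^ (k + 1) := by
    intro k
    induction k with
    | zero => simp
    | succ k ih =>
      calc n = v ^ k * n ^ (k + 1) := ih
        _ = v ^ k * n ^ k * n := by ring
        _ = v ^ k * n ^ k * (v * n ^ 2) := by rw [← h]
        _ = v ^ (k + 1) * n ^ (k + 2) := by ring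
  have := key m
  rw [pow_succ, hm] at this
  simpa using this

lemma aux_newton {E : Type*} [CommRing E] (F : E[X]) :
    ∀ m : ℕ, ∀ x : E, IsUnit (F.derivative.eval x) → F.eval x ^ (2 ^ m) = 0 →
      ∃ y : E, F.eval y = 0 ∧ IsNilpotent (y - x) := by
  intro m
  induction m with
  | zero =>
    intro x _ hx
    exact ⟨x, by simpa using hx, by simp⟩
  | succ m ih =>
    intro x hu hx
    obtain ⟨v, hv⟩ := hu.exists_right_inv
    set t : E := -(F.eval x * v) with ht
    have hnilfx : IsNilpotent (F.eval x) := ⟨2 ^ (m + 1), hx⟩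
    have hnt : IsNilpotent t := by
      obtain ⟨k, hk⟩ := hnilfx
      exact ⟨k, by rw [ht]; rw [neg_pow, mul_pow, hk]; ring⟩
    obtain ⟨k, hk⟩ := F.binomExpansion x t
    have hy1 : F.eval (x + t) = k * v ^ 2 * F.eval x ^ 2 := by
      rw [hk, ht]
      have : F.derivative.eval x * -(F.eval x * v) = -F.eval x := by
        calc F.derivative.eval x * -(F.eval x * v)
            = -(F.derivative.eval x * v * F.eval x) := by ring
          _ = -F.eval x := by rw [hv]; ring
      rw [this]; ring
    have hy1pow : F.eval (x + t) ^ (2 ^ m) = 0 := by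
      rw [hy1, mul_pow, ← pow_mul]
      have : 2 * 2 ^ m = 2 ^ (m + 1) := by ring
      rw [this, hx, mul_zero]
    have hder : IsUnit (F.derivative.eval (x + t)) := by
      have hdvd : (x + t) - x ∣ F.derivative.eval (x + t) - F.derivative.eval x :=
        Polynomial.sub_dvd_eval_sub _ _ _
      have hnil : IsNilpotent (F.derivative.eval (x + t) - F.derivative.eval x) := by
        obtain ⟨c, hc⟩ := hdvd
        obtain ⟨j, hj⟩ : IsNilpotent ((x + t) - x) := by simpa using hnt
        exact ⟨j, by rw [hc, mul_pow, hj, zero_mul]⟩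
      have := hnil.isUnit_add_right_of_commute hu (Commute.all _ _)
      simpa using this
    obtain ⟨y, hy, hyn⟩ := ih (x + t) hder hy1pow
    refine ⟨y, hy, ?_⟩
    have : y - x = (y - (x + t)) + t := by ring
    rw [this]
    exact (Commute.all _ _).isNilpotent_add hyn hnt

lemma aux_minpoly_squarefree {E : Type*} [CommRing E] [IsReduced E] [Nontrivial E]
    [Algebra ℚ E] {x : E} (hx : IsIntegral ℚ x) : Squarefree (minpoly ℚ x) := by
  intro d hd
  obtain ⟨r, hr⟩ := hd
  by_contra hdu
  have hq0 : minpoly ℚ x ≠ 0 := minpoly.ne_zero hx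
  have hd0 : d ≠ 0 := by rintro rfl; rw [mul_zero, zero_mul] at hr; exact hq0 hr
  have hdr0 : d * r ≠ 0 := by
    intro h
    rw [show d * d * r = d * (d * r) from by ring, h, mul_zero] at hr
    exact hq0 hr
  have hs : aeval x (d * r) = 0 := by
    have h2 : (aeval x (d * r)) ^ 2 = 0 := by
      have hsq : (d * r) ^ 2 = minpoly ℚ x * r := by rw [hr]; ring
      rw [← map_pow, hsq, map_mul, minpoly.aeval, zero_mul]
    exact IsReduced.eq_zero _ ⟨2, h2⟩
  obtain ⟨c, hc⟩ := minpoly.dvd ℚ x hs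
  rw [hr] at hc
  have h1 : d * r * 1 = d * r * (d * c) := by
    calc d * r * 1 = d * r := mul_one _
      _ = d * d * r * c := hc
      _ = d * r * (d * c) := by ring
  exact hdu (IsUnit.of_mul_eq_one (a := d) c (mul_left_cancel₀ hdr0 h1).symm)

lemma aux_qx_zero {E : Type*} [CommRing E] [Algebra ℚ E] {f q : ℚ[X]} (hf : f.Separable)
    {x : E} (hfx : aeval x f = 0) (hq : q ∣ f) (hqn : IsNilpotent (aeval x q)) :
    aeval x q = 0 := by
  obtain ⟨h, rfl⟩ := hq
  obtain ⟨a, b, hab⟩ := hf.isCoprime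
  have h1 : aeval x a * aeval x q + aeval x b * aeval x h = 1 := by
    simpa [map_add, map_mul, map_one] using congrArg (aeval x) hab
  have h2 : aeval x q = aeval x a * (aeval x q) ^ 2 := by
    have hqh : aeval x q * aeval x h = 0 := by rw [← map_mul]; exact hfx
    calc aeval x q = aeval x q * (aeval x a * aeval x q + aeval x b * aeval x h) := by
          rw [h1, mul_one]
      _ = aeval x a * (aeval x q) ^ 2 + aeval x b * (aeval x q * aeval x h) := by ring
      _ = aeval x a * (aeval x q) ^ 2 := by rw [hqh, mul_zero, add_zero]
  exact aux_nil_self_mul_sq hqn h2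

/-- An element of a commutative `ℚ`-algebra is separable over `ℚ` if it is a zero
of a separable polynomial `f ∈ ℚ[X]` (i.e. `IsCoprime f f'`). -/
def IsSeparableElem {E : Type*} [CommRing E] [Algebra ℚ E] (x : E) : Prop :=
  ∃ f : Polynomial ℚ, f.Separable ∧ Polynomial.aeval x f = 0

/-- Proposition `CRTforEred`, second part: for a finite-dimensional commutative
`ℚ`-algebra `E`, the map `E_sep → ∏_{𝔪 ∈ Spec E} E/𝔪` induced by the quotient
maps is bijective. -/
theorem stmt_9 {E : Type*} [CommRing E] [Algebra ℚ E] [FiniteDimensional ℚ E] :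
    Function.Bijective
      (fun x : {x : E // IsSeparableElem x} =>
        fun I : PrimeSpectrum E => Ideal.Quotient.mk I.asIdeal (x : E)) := by
  classical
  rcases subsingleton_or_nontrivial E with hE | hE
  · constructor
    · intro a b _
      exact Subtype.ext (Subsingleton.elim _ _)
    · intro z
      refine ⟨⟨0, X, separable_X, by simp⟩, ?_⟩
      funext I
      haveI : Subsingleton (E ⧸ I.asIdeal) := Ideal.Quotient.mk_surjective.subsingleton
      exact Subsingleton.elim _ _
  have hart : IsArtinianRing E := isArtinian_of_tower ℚ inferInstance
  have hNrad : (nilradical E).IsRadical := Ideal.radical_isRadical (0 : Ideal E)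
  haveI hred : IsReduced (E ⧸ nilradical E) :=
    (Ideal.isRadical_iff_quotient_reduced _).mp hNrad
  haveI hnont : Nontrivial (E ⧸ nilradical E) := by
    refine Ideal.Quotient.nontrivial_iff.mpr ?_
    intro htop
    have h1 : (1 : E) ∈ nilradical E := htop ▸ Submodule.mem_top
    obtain ⟨n, hn⟩ := mem_nilradical.mp h1
    rw [one_pow] at hn
    exact one_ne_zero hn
  haveI : Algebra.IsIntegral ℚ E := Algebra.IsIntegral.of_finite ℚ E
  set π : E →ₐ[ℚ] E ⧸ nilradical E := Ideal.Quotient.mkₐ ℚ (nilradical E) with hπ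
  have hmin_sep : ∀ xb : E ⧸ nilradical E, IsIntegral ℚ xb → (minpoly ℚ xb).Separable :=
    fun xb hint => PerfectField.separable_iff_squarefree.mpr (aux_minpoly_squarefree hint)
  have key : ∀ x : E, IsSeparableElem x → aeval x (minpoly ℚ (π x)) = 0 := by
    intro x hx
    obtain ⟨f, hf, hfx⟩ := hx
    have hq : minpoly ℚ (π x) ∣ f :=
      minpoly.dvd ℚ _ (by rw [Polynomial.aeval_algHom_apply, hfx, map_zero])
    have hqn : IsNilpotent (aeval x (minpoly ℚ (π x))) := by
      have hmk : Ideal.Quotient.mk (nilradical E) (aeval x (minpoly ℚ (π x))) = 0 := by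
        have := minpoly.aeval ℚ (π x)
        rw [Polynomial.aeval_algHom_apply (R := ℚ) π] at this
        simpa [hπ, Ideal.Quotient.mkₐ_eq_mk] using this
      exact mem_nilradical.mp (Ideal.Quotient.eq_zero_iff_mem.mp hmk)
    exact aux_qx_zero hf hfx hq hqn
  constructor
  · rintro ⟨x, hx⟩ ⟨y, hy⟩ h
    simp only at h
    have hn : IsNilpotent (x - y) := by
      rw [nilpotent_iff_mem_prime]
      intro J hJ
      exact (Ideal.Quotient.eq).mp (congrFun h ⟨J, hJ⟩)
    have hxy : π x = π y := by
      simp only [hπ, Ideal.Quotient.mkₐ_eq_mk]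
      exact Ideal.Quotient.eq.mpr (mem_nilradical.mpr hn)
    have hqx : aeval x (minpoly ℚ (π x)) = 0 := key x hx
    have hqy : aeval y (minpoly ℚ (π x)) = 0 := by rw [hxy]; exact key y hy
    have hqsep : (minpoly ℚ (π x)).Separable :=
      hmin_sep _ ((Algebra.IsIntegral.isIntegral (R := ℚ) x).map π)
    obtain ⟨v, hv⟩ := (aux_unit_deriv hqsep y hqy).exists_right_inv
    set Qp : E[X] := (minpoly ℚ (π x)).map (algebraMap ℚ E) with hQp
    have hQev : ∀ w : E, Qp.eval w = aeval w (minpoly ℚ (π x)) := fun w => by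
      rw [hQp, Polynomial.eval_map, ← Polynomial.aeval_def]
    have hQdev : Qp.derivative.eval y = aeval y (minpoly ℚ (π x)).derivative := by
      rw [hQp, Polynomial.derivative_map, Polynomial.eval_map, ← Polynomial.aeval_def]
    obtain ⟨k, hk⟩ := Qp.binomExpansion y (x - y)
    rw [add_sub_cancel, hQev x, hqx, hQev y, hqy, hQdev, zero_add] at hk
    have h2 : x - y = -(v * k) * (x - y) ^ 2 := by
      calc x - y = aeval y (minpoly ℚ (π x)).derivative * v * (x - y) := by rw [hv, one_mul]
        _ = v * (aeval y (minpoly ℚ (π x)).derivative * (x - y)) := by ring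
        _ = v * (-(k * (x - y) ^ 2)) := by
            rw [eq_neg_of_add_eq_zero_left hk.symm]
        _ = -(v * k) * (x - y) ^ 2 := by ring
    have := aux_nil_self_mul_sq hn h2
    exact Subtype.ext (by rwa [sub_eq_zero] at this)
  · intro z
    haveI hfin : Finite (PrimeSpectrum E) := by
      haveI := (IsArtinianRing.setOfPred_isPrime_finite E).to_subtype
      exact Finite.of_injective
        (fun I : PrimeSpectrum E => (⟨I.asIdeal, I.isPrime⟩ : {I : Ideal E | I.IsPrime}))
        (fun a b hab => PrimeSpectrum.ext (congrArg Subtype.val hab))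
    have hpair : Pairwise (Function.onFun IsCoprime fun I : PrimeSpectrum E => I.asIdeal) := by
      intro I J hIJ
      have hI : I.asIdeal.IsMaximal := (IsArtinianRing.isPrime_iff_isMaximal _).mp I.isPrime
      have hJ : J.asIdeal.IsMaximal := (IsArtinianRing.isPrime_iff_isMaximal _).mp J.isPrime
      exact Ideal.isCoprime_iff_sup_eq.mpr
        (hI.coprime_of_ne hJ (fun hh => hIJ (PrimeSpectrum.ext hh)))
    obtain ⟨w, hw⟩ := Ideal.quotientInfToPiQuotient_surj hpair z
    obtain ⟨x₀, rfl⟩ := Ideal.Quotient.mk_surjective w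
    rw [Ideal.quotientInfToPiQuotient_mk] at hw
    have hint : IsIntegral ℚ (π x₀) := (Algebra.IsIntegral.isIntegral (R := ℚ) x₀).map π
    have hqsep : (minpoly ℚ (π x₀)).Separable := hmin_sep _ hint
    have hq0 : IsNilpotent (aeval x₀ (minpoly ℚ (π x₀))) := by
      have hmk : Ideal.Quotient.mk (nilradical E) (aeval x₀ (minpoly ℚ (π x₀))) = 0 := by
        have := minpoly.aeval ℚ (π x₀)
        rw [Polynomial.aeval_algHom_apply (R := ℚ) π] at this
        simpa [hπ, Ideal.Quotient.mkₐ_eq_mk] using this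
      exact mem_nilradical.mp (Ideal.Quotient.eq_zero_iff_mem.mp hmk)
    have hqd : IsUnit (aeval x₀ (minpoly ℚ (π x₀)).derivative) := by
      have h1 : IsUnit (π (aeval x₀ (minpoly ℚ (π x₀)).derivative)) := by
        rw [← Polynomial.aeval_algHom_apply]
        exact aux_unit_deriv hqsep _ (minpoly.aeval ℚ _)
      obtain ⟨c, hc⟩ := h1.exists_right_inv
      obtain ⟨c₀, rfl⟩ := Ideal.Quotient.mk_surjective c
      have hnil : IsNilpotent (aeval x₀ (minpoly ℚ (π x₀)).derivative * c₀ - 1) := by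
        refine mem_nilradical.mp (Ideal.Quotient.eq_zero_iff_mem.mp ?_)
        rw [map_sub, map_mul, map_one]
        have : Ideal.Quotient.mk (nilradical E) (aeval x₀ (minpoly ℚ (π x₀)).derivative) =
            π (aeval x₀ (minpoly ℚ (π x₀)).derivative) := by
          simp [hπ, Ideal.Quotient.mkₐ_eq_mk]
        rw [this, hc, sub_self]
      have h2 : IsUnit (aeval x₀ (minpoly ℚ (π x₀)).derivative * c₀) := by
        have := hnil.isUnit_add_one
        simpa [sub_add_cancel] using this
      exact isUnit_of_mul_isUnit_left h2
    set Qp : E[X] := (minpoly ℚ (π x₀)).map (algebraMap ℚ E) with hQp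
    have hQev : ∀ w : E, Qp.eval w = aeval w (minpoly ℚ (π x₀)) := fun w => by
      rw [hQp, Polynomial.eval_map, ← Polynomial.aeval_def]
    have hQdev : Qp.derivative.eval x₀ = aeval x₀ (minpoly ℚ (π x₀)).derivative := by
      rw [hQp, Polynomial.derivative_map, Polynomial.eval_map, ← Polynomial.aeval_def]
    obtain ⟨m, hm⟩ := hq0
    have hpow : Qp.eval x₀ ^ (2 ^ m) = 0 := by
      rw [hQev]
      have hle : m ≤ 2 ^ m := Nat.le_of_lt (Nat.lt_two_pow_self (n := m))
      calc aeval x₀ (minpoly ℚ (π x₀)) ^ (2 ^ m)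
          = aeval x₀ (minpoly ℚ (π x₀)) ^ m *
            aeval x₀ (minpoly ℚ (π x₀)) ^ (2 ^ m - m) := by
            rw [← pow_add, Nat.add_sub_cancel' hle]
        _ = 0 := by rw [hm, zero_mul]
    obtain ⟨y, hy, hyn⟩ := aux_newton Qp m x₀ (by rw [hQdev]; exact hqd) hpow
    refine ⟨⟨y, minpoly ℚ (π x₀), hqsep, by rw [← hQev]; exact hy⟩, ?_⟩
    funext I
    simp only
    rw [← congrFun hw I]
    haveI := I.isPrime
    exact (Ideal.Quotient.eq).mpr (nilradical_le_prime I.asIdeal (mem_nilradical.mpr hyn))
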